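/- Let L be a positive integer, γ > 0, let F be the unitary discrete Fourier transform on ℂ^L and ∇ the circular difference operator (∇z)[k] = z[(k+1) mod L] − z[k]. Then for the prior f(x) = γ‖∇(Fx)‖₂², the proximity operator is given componentwise by prox_f(y)[l] = y[l] / (1 + 2γψ[l]) with ψ[l] = 2 − 2cos(2πl/L); i.e. this point is the unique minimizer over x ∈ ℂ^L of ½‖y − x‖₂² + γ‖∇(Fx)‖₂². -/

import Mathlib

/-- The unitary discrete Fourier transform on `ℂ^L` (identified with `ZMod L → ℂ`):
`(Fx)[k] = L^{-1/2} ∑_{l=0}^{L-1} x[l] e^{-2πikl/L}`. -/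
noncomputable def dft (L : ℕ) [NeZero L] (x : ZMod L → ℂ) : ZMod L → ℂ :=
  fun k => ((1 / Real.sqrt L : ℝ) : ℂ) *
    ∑ l : ZMod L, x l *
      Complex.exp (-(2 * Real.pi * Complex.I * (k.val : ℂ) * (l.val : ℂ) / (L : ℂ)))

/-! ### Auxiliary lemmas -/

/-- The basic root of unity `e^{-2πim/L}`. -/
noncomputable def zt (L : ℕ) (m : ℕ) : ℂ :=
  Complex.exp (-(2 * Real.pi * Complex.I * m / L))

lemma zt_eq (L : ℕ) (m : ℕ) :
    zt L m = Complex.exp (((-(2 * Real.pi * m / L) : ℝ) : ℂ) * Complex.I) := by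
  unfold zt; congr 1; push_cast; ring

lemma zt_pow_L (L : ℕ) [NeZero L] (m : ℕ) : zt L m ^ L = 1 := by
  unfold zt
  rw [← Complex.exp_nat_mul]
  have hL : (L:ℂ) ≠ 0 := Nat.cast_ne_zero.mpr (NeZero.ne L)
  have h : (L:ℂ) * (-(2 * Real.pi * Complex.I * m / L)) = ((-(m:ℤ)) : ℂ) * (2 * Real.pi * Complex.I) := by
    push_cast; field_simp
  rw [h]
  simpa using Complex.exp_int_mul_two_pi_mul_I (-(m:ℤ))

lemma normSq_zt (L : ℕ) (m : ℕ) : Complex.normSq (zt L m) = 1 := by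
  rw [zt_eq, Complex.normSq_eq_norm_sq, Complex.norm_exp_ofReal_mul_I, one_pow]

lemma normSq_zt_sub_one (L : ℕ) (m : ℕ) :
    Complex.normSq (zt L m - 1) = 2 - 2 * Real.cos (2 * Real.pi * m / L) := by
  rw [zt_eq, Complex.normSq_apply]
  simp only [Complex.sub_re, Complex.sub_im, Complex.exp_ofReal_mul_I_re,
    Complex.exp_ofReal_mul_I_im, Complex.one_re, Complex.one_im]
  rw [Real.cos_neg, Real.sin_neg]
  nlinarith [Real.sin_sq_add_cos_sq (2 * Real.pi * m / L)]

lemma dft_eq (L : ℕ) [NeZero L] (x : ZMod L → ℂ) (k : ZMod L) :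
    dft L x k = ((1 / Real.sqrt L : ℝ) : ℂ) * ∑ l : ZMod L, x l * zt L l.val ^ k.val := by
  unfold dft
  congr 1
  refine Finset.sum_congr rfl fun l _ => ?_
  congr 1
  unfold zt
  rw [← Complex.exp_nat_mul]
  congr 1
  ring

lemma zt_pow_val_add_one (L : ℕ) [NeZero L] (m : ℕ) (k : ZMod L) :
    zt L m ^ (k + 1).val = zt L m ^ k.val * zt L m := by
  rw [ZMod.val_add, ← pow_eq_pow_mod _ (zt_pow_L L m), ZMod.val_one_eq_one_mod, pow_add,
    ← pow_eq_pow_mod 1 (zt_pow_L L m), pow_one]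

lemma grad_dft (L : ℕ) [NeZero L] (x : ZMod L → ℂ) (k : ZMod L) :
    dft L x (k + 1) - dft L x k = dft L (fun l => (zt L l.val - 1) * x l) k := by
  rw [dft_eq, dft_eq, dft_eq, ← mul_sub, ← Finset.sum_sub_distrib]
  congr 1
  refine Finset.sum_congr rfl fun l _ => ?_
  rw [zt_pow_val_add_one]
  ring

lemma sum_pow_val (L : ℕ) [NeZero L] (f : ℕ → ℂ) :
    ∑ k : ZMod L, f k.val = ∑ j ∈ Finset.range L, f j :=
  Finset.sum_bij' (fun k _ => k.val) (fun j _ => ((j : ZMod L)))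
    (fun k _ => Finset.mem_range.mpr (ZMod.val_lt k))
    (fun _ _ => Finset.mem_univ _)
    (fun k _ => ZMod.natCast_zmod_val k)
    (fun j hj => ZMod.val_cast_of_lt (Finset.mem_range.mp hj))
    (fun _ _ => rfl)

lemma zt_ne (L : ℕ) [NeZero L] {l m : ZMod L} (h : l ≠ m) :
    zt L l.val * (starRingEnd ℂ) (zt L m.val) ≠ 1 := by
  have hL : (L:ℂ) ≠ 0 := Nat.cast_ne_zero.mpr (NeZero.ne L)
  unfold zt
  rw [← Complex.exp_conj]
  rw [← Complex.exp_add]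
  intro hone
  rw [Complex.exp_eq_one_iff] at hone
  obtain ⟨n, hn⟩ := hone
  have hc : ((m.val : ℤ) - l.val : ℂ) * (2 * Real.pi * Complex.I) / L = n * (2 * Real.pi * Complex.I) := by
    rw [← hn]
    simp only [map_neg, map_mul, map_div₀, Complex.conj_I, Complex.conj_ofReal,
      Complex.conj_natCast, map_ofNat]
    push_cast
    ring
  have h2 : (2 * (Real.pi:ℂ) * Complex.I) ≠ 0 := by
    simp [Real.pi_ne_zero, Complex.I_ne_zero, Complex.ofReal_ne_zero]
  have hd : ((m.val : ℤ) - l.val : ℂ) = n * L := by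
    rw [div_eq_iff hL] at hc
    rw [show (n:ℂ) * (2 * Real.pi * Complex.I) * L = (n * L) * (2 * Real.pi * Complex.I) by ring] at hc
    exact mul_right_cancel₀ h2 hc
  have hdz : ((m.val : ℤ) - l.val) = n * L := by exact_mod_cast hd
  have h1 : m.val < L := ZMod.val_lt m
  have h2' : l.val < L := ZMod.val_lt l
  have hne : m.val ≠ l.val := fun e => h (ZMod.val_injective L e.symm)
  have hL1 : (1:ℤ) ≤ L := by exact_mod_cast Nat.one_le_iff_ne_zero.mpr (NeZero.ne L)
  rcases lt_trichotomy n 0 with hn0 | hn0 | hn0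
  · nlinarith [hdz, h1, h2']
  · apply hne
    rw [hn0, zero_mul, sub_eq_zero] at hdz
    exact_mod_cast hdz
  · nlinarith [hdz, h1, h2']

lemma orth (L : ℕ) [NeZero L] (l m : ZMod L) :
    ∑ k : ZMod L, (zt L l.val * (starRingEnd ℂ) (zt L m.val)) ^ (ZMod.val k)
      = if l = m then (L : ℂ) else 0 := by
  rw [sum_pow_val]
  by_cases h : l = m
  · subst h
    rw [Complex.mul_conj, normSq_zt]
    simp
  · simp only [h, if_false]
    have hω : (zt L l.val * (starRingEnd ℂ) (zt L m.val)) ^ L = 1 := by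
      rw [mul_pow, ← map_pow, zt_pow_L, zt_pow_L, map_one, mul_one]
    rw [geom_sum_eq (zt_ne L h), hω, sub_self, zero_div]

lemma parseval (L : ℕ) [NeZero L] (z : ZMod L → ℂ) :
    ∑ k : ZMod L, ‖dft L z k‖ ^ 2 = ∑ l : ZMod L, ‖z l‖ ^ 2 := by
  have hnorm : ∀ w : ℂ, ((‖w‖ ^ 2 : ℝ) : ℂ) = w * (starRingEnd ℂ) w := fun w => by
    rw [Complex.mul_conj]
    norm_cast
    rw [Complex.sq_norm]
  apply Complex.ofReal_injective
  rw [Complex.ofReal_sum, Complex.ofReal_sum]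
  simp_rw [hnorm]
  have hstep : ∀ k : ZMod L, dft L z k * (starRingEnd ℂ) (dft L z k)
      = ((1 / Real.sqrt L : ℝ) : ℂ) ^ 2 *
        ∑ l : ZMod L, ∑ m : ZMod L,
          (z l * (starRingEnd ℂ) (z m)) * (zt L l.val * (starRingEnd ℂ) (zt L m.val)) ^ k.val := by
    intro k
    rw [dft_eq, map_mul, Complex.conj_ofReal, map_sum]
    simp_rw [map_mul, map_pow]
    rw [show ∀ a b c d : ℂ, a * b * (c * d) = (a * c) * (b * d) from fun a b c d => by ring,
      ← sq, Finset.sum_mul_sum]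
    congr 1
    refine Finset.sum_congr rfl fun l _ => Finset.sum_congr rfl fun m _ => ?_
    rw [mul_pow]
    ring
  simp_rw [hstep]
  rw [← Finset.mul_sum, Finset.sum_comm]
  have hinner : ∀ l : ZMod L,
      ∑ k : ZMod L, ∑ m : ZMod L,
          (z l * (starRingEnd ℂ) (z m)) * (zt L l.val * (starRingEnd ℂ) (zt L m.val)) ^ k.val
        = z l * (starRingEnd ℂ) (z l) * L := by
    intro l
    rw [Finset.sum_comm]
    have : ∀ m : ZMod L,
        ∑ k : ZMod L, (z l * (starRingEnd ℂ) (z m)) * (zt L l.val * (starRingEnd ℂ) (zt L m.val)) ^ k.val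
          = if l = m then z l * (starRingEnd ℂ) (z m) * L else 0 := by
      intro m
      rw [← Finset.mul_sum, orth]
      by_cases h : l = m <;> simp [h]
    simp_rw [this]
    rw [Finset.sum_ite_eq Finset.univ l (fun m => z l * (starRingEnd ℂ) (z m) * L)]
    simp
  simp_rw [hinner]
  have hL0 : (0:ℝ) ≤ L := Nat.cast_nonneg L
  have hLne : (L:ℂ) ≠ 0 := Nat.cast_ne_zero.mpr (NeZero.ne L)
  have hs : ((1 / Real.sqrt L : ℝ) : ℂ) ^ 2 = 1 / (L : ℂ) := by
    rw [← Complex.ofReal_pow]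
    rw [div_pow, one_pow, Real.sq_sqrt hL0]
    push_cast
    ring
  rw [hs, ← Finset.sum_mul]
  field_simp

lemma scalar_key (c : ℝ) (y x : ℂ) (ht : (1 + 2*c) ≠ 0) :
    ‖y - y / ((1 + 2*c : ℝ) : ℂ)‖^2/2 + c * ‖y / ((1 + 2*c : ℝ) : ℂ)‖^2
      + (1/2 + c) * ‖x - y / ((1 + 2*c : ℝ) : ℂ)‖^2
    = ‖y - x‖^2/2 + c * ‖x‖^2 := by
  have hq : y / ((1 + 2*c : ℝ) : ℂ) = (((1 + 2*c)⁻¹ : ℝ) : ℂ) * y := by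
    rw [div_eq_mul_inv, ← Complex.ofReal_inv, mul_comm]
  have hsq : ∀ w : ℂ, ‖w‖^2 = w.re^2 + w.im^2 := fun w => by
    rw [Complex.sq_norm, Complex.normSq_apply]; ring
  rw [hq]
  simp only [hsq, Complex.sub_re, Complex.sub_im, Complex.re_ofReal_mul, Complex.im_ofReal_mul]
  field_simp
  ring

lemma grad_energy (L : ℕ) [NeZero L] (x : ZMod L → ℂ) :
    ∑ k : ZMod L, ‖dft L x (k + 1) - dft L x k‖ ^ 2
      = ∑ l : ZMod L, (2 - 2 * Real.cos (2 * Real.pi * (l.val : ℝ) / (L : ℝ))) * ‖x l‖ ^ 2 := by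
  calc ∑ k : ZMod L, ‖dft L x (k + 1) - dft L x k‖ ^ 2
      = ∑ k : ZMod L, ‖dft L (fun l => (zt L l.val - 1) * x l) k‖ ^ 2 :=
        Finset.sum_congr rfl fun k _ => by rw [grad_dft]
    _ = ∑ l : ZMod L, ‖(zt L l.val - 1) * x l‖ ^ 2 := parseval L _
    _ = ∑ l : ZMod L, (2 - 2 * Real.cos (2 * Real.pi * (l.val : ℝ) / (L : ℝ))) * ‖x l‖ ^ 2 := by
        refine Finset.sum_congr rfl fun l _ => ?_
        rw [norm_mul, mul_pow]
        congr 1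
        rw [Complex.sq_norm, normSq_zt_sub_one]

/-- for `γ > 0` and the prior `f(x) = γ‖∇(Fx)‖₂²` (circular gradient of
the unitary DFT), the proximity operator is given componentwise by
`prox_f(y)[l] = y[l]/(1 + 2γψ[l])` with `ψ[l] = 2 - 2cos(2πl/L)`: this point is the
unique minimizer over `x ∈ ℂ^L` of `½‖y - x‖₂² + γ‖∇(Fx)‖₂²`. -/
theorem prox_grad_dft
    (L : ℕ) [NeZero L] (γ : ℝ) (hγ : 0 < γ) (y : ZMod L → ℂ) :
    ∀ x : ZMod L → ℂ,
      x ≠ (fun l => y l /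
        (((1 + 2 * γ * (2 - 2 * Real.cos (2 * Real.pi * (l.val : ℝ) / (L : ℝ))) : ℝ)) : ℂ)) →
      (1 / 2) * (∑ l : ZMod L, ‖y l - y l /
            (((1 + 2 * γ * (2 - 2 * Real.cos (2 * Real.pi * (l.val : ℝ) / (L : ℝ))) : ℝ)) : ℂ)‖ ^ 2) +
          γ * ∑ k : ZMod L,
            ‖dft L (fun l => y l /
                (((1 + 2 * γ * (2 - 2 * Real.cos (2 * Real.pi * (l.val : ℝ) / (L : ℝ))) : ℝ)) : ℂ))
                (k + 1) -
              dft L (fun l => y l /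
                (((1 + 2 * γ * (2 - 2 * Real.cos (2 * Real.pi * (l.val : ℝ) / (L : ℝ))) : ℝ)) : ℂ))
                k‖ ^ 2 <
        (1 / 2) * (∑ l : ZMod L, ‖y l - x l‖ ^ 2) +
          γ * ∑ k : ZMod L, ‖dft L x (k + 1) - dft L x k‖ ^ 2 := by
  intro x hx
  have hden : ∀ l : ZMod L,
      (1 + 2 * γ * (2 - 2 * Real.cos (2 * Real.pi * (l.val : ℝ) / (L : ℝ))) : ℝ)
        = 1 + 2 * (γ * (2 - 2 * Real.cos (2 * Real.pi * (l.val : ℝ) / (L : ℝ)))) :=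
    fun l => by ring
  have hc0 : ∀ l : ZMod L,
      0 ≤ γ * (2 - 2 * Real.cos (2 * Real.pi * (l.val : ℝ) / (L : ℝ))) := fun l => by
    have := Real.cos_le_one (2 * Real.pi * (l.val : ℝ) / (L : ℝ))
    nlinarith
  have htne : ∀ l : ZMod L,
      (1 + 2 * (γ * (2 - 2 * Real.cos (2 * Real.pi * (l.val : ℝ) / (L : ℝ)))) : ℝ) ≠ 0 :=
    fun l => by have := hc0 l; positivity
  simp_rw [hden] at hx ⊢
  rw [grad_energy, grad_energy]
  have hobj : ∀ z : ZMod L → ℂ,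
      (1 / 2 : ℝ) * (∑ l : ZMod L, ‖y l - z l‖ ^ 2) +
          γ * ∑ l : ZMod L, (2 - 2 * Real.cos (2 * Real.pi * (l.val : ℝ) / (L : ℝ))) * ‖z l‖ ^ 2
        = ∑ l : ZMod L, (‖y l - z l‖ ^ 2 / 2
            + γ * (2 - 2 * Real.cos (2 * Real.pi * (l.val : ℝ) / (L : ℝ))) * ‖z l‖ ^ 2) := by
    intro z
    rw [Finset.mul_sum, Finset.mul_sum, ← Finset.sum_add_distrib]
    exact Finset.sum_congr rfl fun l _ => by ring
  rw [hobj, hobj]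
  have hkey : ∀ l : ZMod L,
      ‖y l - y l / ((1 + 2 * (γ * (2 - 2 * Real.cos (2 * Real.pi * (l.val : ℝ) / (L : ℝ)))) : ℝ) : ℂ)‖ ^ 2 / 2
        + γ * (2 - 2 * Real.cos (2 * Real.pi * (l.val : ℝ) / (L : ℝ))) *
          ‖y l / ((1 + 2 * (γ * (2 - 2 * Real.cos (2 * Real.pi * (l.val : ℝ) / (L : ℝ)))) : ℝ) : ℂ)‖ ^ 2
        + (1/2 + γ * (2 - 2 * Real.cos (2 * Real.pi * (l.val : ℝ) / (L : ℝ)))) *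
          ‖x l - y l / ((1 + 2 * (γ * (2 - 2 * Real.cos (2 * Real.pi * (l.val : ℝ) / (L : ℝ)))) : ℝ) : ℂ)‖ ^ 2
      = ‖y l - x l‖ ^ 2 / 2
        + γ * (2 - 2 * Real.cos (2 * Real.pi * (l.val : ℝ) / (L : ℝ))) * ‖x l‖ ^ 2 :=
    fun l => scalar_key (γ * (2 - 2 * Real.cos (2 * Real.pi * (l.val : ℝ) / (L : ℝ))))
      (y l) (x l) (htne l)
  obtain ⟨l0, hl0⟩ := Function.ne_iff.mp hx
  refine Finset.sum_lt_sum (fun l _ => ?_) ⟨l0, Finset.mem_univ l0, ?_⟩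
  · have h := hkey l
    have hnn : 0 ≤ (1/2 + γ * (2 - 2 * Real.cos (2 * Real.pi * (l.val : ℝ) / (L : ℝ)))) *
        ‖x l - y l / ((1 + 2 * (γ * (2 - 2 * Real.cos (2 * Real.pi * (l.val : ℝ) / (L : ℝ)))) : ℝ) : ℂ)‖ ^ 2 := by
      have := hc0 l
      positivity
    linarith
  · have h := hkey l0
    have hpos : 0 < (1/2 + γ * (2 - 2 * Real.cos (2 * Real.pi * (l0.val : ℝ) / (L : ℝ)))) *
        ‖x l0 - y l0 / ((1 + 2 * (γ * (2 - 2 * Real.cos (2 * Real.pi * (l0.val : ℝ) / (L : ℝ)))) : ℝ) : ℂ)‖ ^ 2 := by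
      have h1 : 0 < (1/2 : ℝ) + γ * (2 - 2 * Real.cos (2 * Real.pi * (l0.val : ℝ) / (L : ℝ))) := by
        have := hc0 l0; linarith
      have h2 : x l0 - y l0 / ((1 + 2 * (γ * (2 - 2 * Real.cos (2 * Real.pi * (l0.val : ℝ) / (L : ℝ)))) : ℝ) : ℂ) ≠ 0 :=
        sub_ne_zero.mpr hl0
      have h3 : 0 < ‖x l0 - y l0 / ((1 + 2 * (γ * (2 - 2 * Real.cos (2 * Real.pi * (l0.val : ℝ) / (L : ℝ)))) : ℝ) : ℂ)‖ :=
        norm_pos_iff.mpr h2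
      positivity
    linarith
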